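/- Let W ∈ ℝ^{s×c} have rank r with σ_r(W) = γ > 0, let 0 < c < 1/2, and ‖E‖₂ ≤ cγ. Let Ŵ = (W+E)_r, F = Ŵ − W, and Q, Z the left/right singular factors of W. Then the normal component satisfies ‖(I − QQᵀ)F(I − ZZᵀ)‖₂ ≤ (4/(1−2c))·‖E‖₂²/γ. -/

import Mathlib

open Matrix
open scoped Matrix.Norms.L2Operator

set_option maxHeartbeats 1000000

namespace TruncAux

/-- view a plain vector as a Euclidean vector -/
noncomputable def ev {n : ℕ} (v : Fin n → ℝ) : EuclideanSpace ℝ (Fin n) :=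
  (WithLp.equiv 2 (Fin n → ℝ)).symm v

variable {m n p : ℕ}

lemma ev_add (u v : Fin n → ℝ) : ev (u + v) = ev u + ev v := rfl
lemma ev_sub (u v : Fin n → ℝ) : ev (u - v) = ev u - ev v := rfl
lemma ev_smul (c : ℝ) (v : Fin n → ℝ) : ev (c • v) = c • ev v := rfl
lemma ev_zero : ev (0 : Fin n → ℝ) = 0 := rfl

lemma norm_mulVec_le (A : Matrix (Fin m) (Fin n) ℝ) (v : Fin n → ℝ) :
    ‖ev (A *ᵥ v)‖ ≤ ‖A‖ * ‖ev v‖ :=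
  Matrix.l2_opNorm_mulVec A (ev v)

lemma opNorm_le_of (A : Matrix (Fin m) (Fin n) ℝ) {C : ℝ} (hC : 0 ≤ C)
    (h : ∀ v : Fin n → ℝ, ‖ev (A *ᵥ v)‖ ≤ C * ‖ev v‖) : ‖A‖ ≤ C := by
  rw [Matrix.l2_opNorm_def]
  exact ContinuousLinearMap.opNorm_le_bound _ hC fun x => h x

lemma norm_one_le : ‖(1 : Matrix (Fin n) (Fin n) ℝ)‖ ≤ 1 := by
  refine opNorm_le_of _ zero_le_one fun v => ?_
  rw [Matrix.one_mulVec, one_mul]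

lemma norm_orth_le (Q : Matrix (Fin m) (Fin n) ℝ) (hQ : Qᵀ * Q = 1) : ‖Q‖ ≤ 1 := by
  have h1 : ‖Qᴴ * Q‖ = ‖Q‖ * ‖Q‖ := Matrix.l2_opNorm_conjTranspose_mul_self Q
  rw [Matrix.conjTranspose_eq_transpose_of_trivial, hQ] at h1
  nlinarith [norm_nonneg Q, norm_one_le (n := n)]

lemma norm_transpose' (A : Matrix (Fin m) (Fin n) ℝ) : ‖Aᵀ‖ = ‖A‖ := by
  rw [← Matrix.conjTranspose_eq_transpose_of_trivial]
  exact Matrix.l2_opNorm_conjTranspose A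

lemma norm_proj_le (Q : Matrix (Fin m) (Fin n) ℝ) (hQ : Qᵀ * Q = 1) :
    ‖(1 : Matrix (Fin m) (Fin m) ℝ) - Q * Qᵀ‖ ≤ 1 := by
  set P : Matrix (Fin m) (Fin m) ℝ := 1 - Q * Qᵀ with hP
  have hPP : P * P = P := by
    simp only [hP, Matrix.sub_mul, Matrix.mul_sub, Matrix.one_mul, Matrix.mul_one,
      Matrix.mul_assoc]
    rw [← Matrix.mul_assoc Qᵀ Q Qᵀ, hQ, Matrix.one_mul]
    abel
  have hPT : Pᵀ = P := by
    simp [hP, Matrix.transpose_sub, Matrix.transpose_mul]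
  have h1 : ‖Pᴴ * P‖ = ‖P‖ * ‖P‖ := Matrix.l2_opNorm_conjTranspose_mul_self P
  rw [Matrix.conjTranspose_eq_transpose_of_trivial, hPT, hPP] at h1
  nlinarith [norm_nonneg P]

end TruncAux

namespace TruncAux
open Matrix
open scoped Matrix.Norms.L2Operator
variable {m n p : ℕ}

lemma ev_eq_zero {v : Fin n → ℝ} (h : ev v = 0) : v = 0 := by
  have := congrArg (WithLp.equiv 2 (Fin n → ℝ)) h
  simpa [ev] using this

lemma inv_bound (A : Matrix (Fin n) (Fin n) ℝ) {c : ℝ} (hc : 0 < c)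
    (h : ∀ v : Fin n → ℝ, c * ‖ev v‖ ≤ ‖ev (A *ᵥ v)‖) :
    IsUnit A.det ∧ ‖A⁻¹‖ ≤ 1 / c := by
  have hinj : Function.Injective A.mulVec := by
    intro x y hxy
    have h0 : A *ᵥ (x - y) = 0 := by rw [Matrix.mulVec_sub, hxy, sub_self]
    have h1 := h (x - y)
    rw [h0, ev_zero, norm_zero] at h1
    have h2 : ‖ev (x - y)‖ ≤ 0 := by
      by_contra h3
      push_neg at h3
      nlinarith
    have h4 : x - y = 0 := ev_eq_zero (norm_le_zero_iff.mp h2)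
    exact sub_eq_zero.mp h4
  have hU : IsUnit A := Matrix.mulVec_injective_iff_isUnit.mp hinj
  have hdet : IsUnit A.det := (Matrix.isUnit_iff_isUnit_det A).mp hU
  refine ⟨hdet, opNorm_le_of _ (by positivity) fun v => ?_⟩
  have hAv : A *ᵥ (A⁻¹ *ᵥ v) = v := by
    rw [Matrix.mulVec_mulVec, Matrix.mul_nonsing_inv A hdet, Matrix.one_mulVec]
  have h5 := h (A⁻¹ *ᵥ v)
  rw [hAv] at h5
  rw [div_mul_eq_mul_div, le_div_iff₀ hc]
  linarith

lemma dotProduct_le (v y : Fin n → ℝ) : |v ⬝ᵥ y| ≤ ‖ev v‖ * ‖ev y‖ := by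
  have h : v ⬝ᵥ y = inner ℝ (ev v) (ev y) := by
    simp [ev, PiLp.inner_apply, dotProduct, RCLike.inner_apply, mul_comm]
  rw [h]
  exact abs_real_inner_le_norm (ev v) (ev y)

lemma vecMulVec_mulVec' (u : Fin m → ℝ) (v y : Fin n → ℝ) :
    vecMulVec u v *ᵥ y = (v ⬝ᵥ y) • u := by
  ext i
  simp only [Matrix.mulVec, Matrix.vecMulVec_apply, dotProduct, Pi.smul_apply, smul_eq_mul]
  rw [Finset.sum_mul]
  exact Finset.sum_congr rfl fun k _ => by ring

lemma norm_vecMulVec_le (u : Fin m → ℝ) (v : Fin n → ℝ) :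
    ‖vecMulVec u v‖ ≤ ‖ev u‖ * ‖ev v‖ := by
  refine opNorm_le_of _ (by positivity) fun y => ?_
  rw [vecMulVec_mulVec', ev_smul, norm_smul]
  calc |v ⬝ᵥ y| * ‖ev u‖ ≤ (‖ev v‖ * ‖ev y‖) * ‖ev u‖ := by
        exact mul_le_mul_of_nonneg_right (dotProduct_le v y) (norm_nonneg _)
    _ = ‖ev u‖ * ‖ev v‖ * ‖ev y‖ := by ring

lemma mul_vecMulVec (L : Matrix (Fin m) (Fin m) ℝ) (u v : Fin m → ℝ) :
    L * vecMulVec u v = vecMulVec (L *ᵥ u) v := by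
  ext i j
  simp only [Matrix.mul_apply, Matrix.vecMulVec_apply, Matrix.mulVec, dotProduct,
    Finset.sum_mul]
  exact Finset.sum_congr rfl fun k _ => by ring

end TruncAux


/-- The spectral (ℓ²-operator) norm of a real matrix. -/
noncomputable def spNorm {m n : ℕ} (A : Matrix (Fin m) (Fin n) ℝ) : ℝ := ‖A‖

/-- The `k`-th singular value of `A` (1-indexed), characterized as the
distance in spectral norm from `A` to the matrices of rank `< k`. -/
noncomputable def sval {m n : ℕ} (k : ℕ) (A : Matrix (Fin m) (Fin n) ℝ) : ℝ :=
  sInf {x | ∃ B : Matrix (Fin m) (Fin n) ℝ, B.rank < k ∧ x = spNorm (A - B)}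

namespace TruncAux
open Matrix
open scoped Matrix.Norms.L2Operator
variable {m n p : ℕ}

lemma sval_le {k : ℕ} (A B : Matrix (Fin m) (Fin n) ℝ) (hB : B.rank < k) :
    sval k A ≤ spNorm (A - B) := by
  apply csInf_le
  · refine ⟨0, fun x hx => ?_⟩
    obtain ⟨C, _, rfl⟩ := hx
    exact norm_nonneg _
  · exact ⟨B, hB, rfl⟩

lemma rank_one_sub_lt {r : ℕ} {x : Fin r → ℝ} (hx : x ⬝ᵥ x = 1) :
    ((1 : Matrix (Fin r) (Fin r) ℝ) - vecMulVec x x).rank < r := by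
  set M : Matrix (Fin r) (Fin r) ℝ := 1 - vecMulVec x x with hM
  have hx0 : x ≠ 0 := by
    intro h; rw [h] at hx; simp [dotProduct] at hx
  have hker : x ∈ LinearMap.ker M.mulVecLin := by
    rw [LinearMap.mem_ker, Matrix.mulVecLin_apply, hM, Matrix.sub_mulVec,
      Matrix.one_mulVec, vecMulVec_mulVec', hx, one_smul, sub_self]
  have hkerne : LinearMap.ker M.mulVecLin ≠ ⊥ := by
    intro h
    rw [h] at hker
    exact hx0 (Submodule.mem_bot ℝ |>.mp hker)
  have hrn := LinearMap.finrank_range_add_finrank_ker M.mulVecLin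
  have hdim : Module.finrank ℝ (Fin r → ℝ) = r := by simp
  have hkpos : 0 < Module.finrank ℝ (LinearMap.ker M.mulVecLin) := by
    rcases Nat.eq_zero_or_pos (Module.finrank ℝ (LinearMap.ker M.mulVecLin)) with h | h
    · exact absurd (Submodule.finrank_eq_zero.mp h) hkerne
    · exact h
  have : M.rank = Module.finrank ℝ (LinearMap.range M.mulVecLin) := rfl
  omega

lemma factor {s c r : ℕ} (M : Matrix (Fin s) (Fin c) ℝ) (Q : Matrix (Fin s) (Fin r) ℝ)
    (Z : Matrix (Fin c) (Fin r) ℝ) (hrM : M.rank ≤ r) (hA : IsUnit (Qᵀ * M * Z).det) :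
    M = (M * Z) * (Qᵀ * M * Z)⁻¹ * (Qᵀ * M) := by
  set A := Qᵀ * M * Z with hAdef
  have hAU : IsUnit A := (Matrix.isUnit_iff_isUnit_det A).mpr hA
  have hrA : A.rank = r := by simpa using Matrix.rank_of_isUnit A hAU
  have hrMZ : (M * Z).rank = r := by
    have h1 : (M * Z).rank ≤ M.rank := Matrix.rank_mul_le_left M Z
    have h2 : A.rank ≤ (M * Z).rank := by
      rw [hAdef, Matrix.mul_assoc]
      exact Matrix.rank_mul_le_right Qᵀ (M * Z)
    omega
  have hle : LinearMap.range (M * Z).mulVecLin ≤ LinearMap.range M.mulVecLin := by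
    rw [Matrix.mulVecLin_mul]
    exact LinearMap.range_comp_le_range _ _
  have heq : LinearMap.range (M * Z).mulVecLin = LinearMap.range M.mulVecLin := by
    apply Submodule.eq_of_le_of_finrank_le hle
    show M.rank ≤ (M * Z).rank
    omega
  have hB : ∀ j : Fin c, ∃ b : Fin r → ℝ, (M * Z) *ᵥ b = M *ᵥ Pi.single j 1 := by
    intro j
    have : M *ᵥ Pi.single j 1 ∈ LinearMap.range M.mulVecLin :=
      ⟨Pi.single j 1, rfl⟩
    rw [← heq] at this
    obtain ⟨b, hb⟩ := this
    exact ⟨b, hb⟩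
  choose b hb using hB
  set B : Matrix (Fin r) (Fin c) ℝ := Matrix.of (fun i j => b j i) with hBdef
  have hMB : M = (M * Z) * B := by
    ext i j
    have := congrFun (hb j) i
    simp only [Matrix.mulVec_single, MulOpposite.op_one, one_smul, Matrix.col_apply] at this
    rw [← this]
    simp [Matrix.mul_apply, Matrix.mulVec, dotProduct, hBdef]
  have hQM : Qᵀ * M = A * B := by
    rw [hAdef]
    conv_lhs => rw [hMB]
    rw [← Matrix.mul_assoc, ← Matrix.mul_assoc]
  rw [hQM, ← Matrix.mul_assoc, Matrix.mul_assoc (M * Z) A⁻¹ A,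
    Matrix.nonsing_inv_mul A hA, Matrix.mul_one, ← hMB]

end TruncAux


/-- `Ahat` is a best rank-`r` approximation of `A` in spectral norm. -/
def IsBestRankApprox {m n : ℕ} (r : ℕ) (A Ahat : Matrix (Fin m) (Fin n) ℝ) : Prop :=
  Ahat.rank ≤ r ∧ ∀ B : Matrix (Fin m) (Fin n) ℝ, B.rank ≤ r →
    spNorm (A - Ahat) ≤ spNorm (A - B)

open TruncAux

/-- Second-order bound on the normal component of the rank-`r` truncation
error: `‖(I − QQᵀ) F (I − ZZᵀ)‖₂ ≤ (4/(1−2c)) ‖E‖₂² / γ` where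
`F = (W+E)_r − W` and `γ = σ_r(W)`. -/
theorem truncation_normal_component_bound {s c r : ℕ}
    (Q : Matrix (Fin s) (Fin r) ℝ) (Z : Matrix (Fin c) (Fin r) ℝ)
    (Lam : Matrix (Fin r) (Fin r) ℝ)
    (W E What : Matrix (Fin s) (Fin c) ℝ)
    (hQ : Qᵀ * Q = 1) (hZ : Zᵀ * Z = 1)
    (hLamDiag : Lam.IsDiag) (hLam : IsUnit Lam.det)
    (hW : W = Q * Lam * Zᵀ) (hrankW : W.rank = r)
    (γ : ℝ) (hγ : sval r W = γ) (hγpos : 0 < γ)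
    (cc : ℝ) (hc0 : 0 < cc) (hc1 : cc < 1 / 2)
    (hE : spNorm E ≤ cc * γ)
    (hWhat : IsBestRankApprox r (W + E) What) :
    spNorm ((1 - Q * Qᵀ) * (What - W) * (1 - Z * Zᵀ))
      ≤ (4 / (1 - 2 * cc)) * spNorm E ^ 2 / γ := by
  classical
  simp only [spNorm] at hE ⊢
  set F : Matrix (Fin s) (Fin c) ℝ := What - W with hFdef
  -- ‖F‖ ≤ 2‖E‖
  have hF2 : ‖F‖ ≤ 2 * ‖E‖ := by
    have hbest := hWhat.2 W (le_of_eq hrankW)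
    simp only [spNorm] at hbest
    have h1 : W + E - W = E := by abel
    rw [h1] at hbest
    have h2 : F = E - (W + E - What) := by rw [hFdef]; abel
    calc ‖F‖ = ‖E - (W + E - What)‖ := by rw [h2]
      _ ≤ ‖E‖ + ‖W + E - What‖ := norm_sub_le _ _
      _ ≤ 2 * ‖E‖ := by linarith
  have hEnn : (0:ℝ) ≤ ‖E‖ := norm_nonneg _
  have hFnn : (0:ℝ) ≤ ‖F‖ := norm_nonneg _
  -- projections kill W
  have hPW : (1 - Q * Qᵀ) * W = 0 := by
    rw [hW, Matrix.sub_mul, Matrix.one_mul, sub_eq_zero]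
    have : Q * Qᵀ * (Q * Lam * Zᵀ) = Q * (Qᵀ * Q) * (Lam * Zᵀ) := by
      simp only [Matrix.mul_assoc]
    rw [this, hQ, Matrix.mul_one, Matrix.mul_assoc]
  have hWP : W * (1 - Z * Zᵀ) = 0 := by
    rw [hW, Matrix.mul_sub, Matrix.mul_one, sub_eq_zero]
    have : Q * Lam * Zᵀ * (Z * Zᵀ) = Q * Lam * ((Zᵀ * Z) * Zᵀ) := by
      simp only [Matrix.mul_assoc]
    rw [this, hZ, Matrix.one_mul]
  -- lower bound for Lam
  have hLamLow : ∀ v : Fin r → ℝ, γ * ‖ev v‖ ≤ ‖ev (Lam *ᵥ v)‖ := by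
    intro v
    rcases eq_or_ne v 0 with rfl | hv
    · simp [ev_zero]
    by_contra hcon
    push_neg at hcon
    have ht : 0 < ‖ev v‖ := by
      rw [norm_pos_iff]
      intro h; exact hv (ev_eq_zero h)
    set t : ℝ := ‖ev v‖ with htdef
    set x : Fin r → ℝ := t⁻¹ • v with hxdef
    have hxnorm : ‖ev x‖ = 1 := by
      rw [hxdef, ev_smul, norm_smul, Real.norm_eq_abs, abs_inv, abs_of_pos ht, ← htdef,
        inv_mul_cancel₀ ht.ne']
    have hxx : x ⬝ᵥ x = 1 := by
      have h := dotProduct_le x x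
      have h2 : x ⬝ᵥ x = inner ℝ (ev x) (ev x) := by
        rw [PiLp.inner_apply]
        simp [ev, PiLp.inner_apply, dotProduct, RCLike.inner_apply, mul_comm, sq]
      rw [h2, real_inner_self_eq_norm_sq, hxnorm]; norm_num
    -- candidate lower-rank matrix
    set B0 : Matrix (Fin s) (Fin c) ℝ := Q * (Lam * (1 - vecMulVec x x)) * Zᵀ with hB0
    have hrB0 : B0.rank < r := by
      calc B0.rank ≤ (Q * (Lam * (1 - vecMulVec x x))).rank := Matrix.rank_mul_le_left _ _
        _ ≤ (Lam * (1 - vecMulVec x x)).rank := Matrix.rank_mul_le_right _ _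
        _ ≤ ((1 : Matrix (Fin r) (Fin r) ℝ) - vecMulVec x x).rank :=
            Matrix.rank_mul_le_right _ _
        _ < r := rank_one_sub_lt hxx
    have hWB0 : W - B0 = Q * (Lam * vecMulVec x x) * Zᵀ := by
      rw [hW, hB0, Matrix.mul_sub, Matrix.mul_one, Matrix.mul_sub, Matrix.sub_mul]
      abel
    have hLx : ‖ev (Lam *ᵥ x)‖ < γ := by
      rw [hxdef, Matrix.mulVec_smul, ev_smul, norm_smul, Real.norm_eq_abs, abs_inv,
        abs_of_pos ht]
      rw [inv_mul_lt_iff₀ ht]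
      linarith [hcon]
    have hnormWB0 : ‖W - B0‖ < γ := by
      rw [hWB0]
      calc ‖Q * (Lam * vecMulVec x x) * Zᵀ‖
          ≤ ‖Q * (Lam * vecMulVec x x)‖ * ‖Zᵀ‖ := Matrix.l2_opNorm_mul _ _
        _ ≤ ‖Q‖ * ‖Lam * vecMulVec x x‖ * ‖Zᵀ‖ := by
            apply mul_le_mul_of_nonneg_right (Matrix.l2_opNorm_mul _ _) (norm_nonneg _)
        _ ≤ 1 * ‖Lam * vecMulVec x x‖ * 1 := by
            apply mul_le_mul
            · apply mul_le_mul_of_nonneg_right (norm_orth_le Q hQ) (norm_nonneg _)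
            · rw [norm_transpose']; exact norm_orth_le Z hZ
            · exact norm_nonneg _
            · positivity
        _ = ‖Lam * vecMulVec x x‖ := by ring
        _ = ‖vecMulVec (Lam *ᵥ x) x‖ := by rw [TruncAux.mul_vecMulVec]
        _ ≤ ‖ev (Lam *ᵥ x)‖ * ‖ev x‖ := norm_vecMulVec_le _ _
        _ = ‖ev (Lam *ᵥ x)‖ := by rw [hxnorm, mul_one]
        _ < γ := hLx
    have := sval_le W B0 hrB0
    simp only [spNorm] at this
    rw [hγ] at this
    linarith
  -- the block A
  set A : Matrix (Fin r) (Fin r) ℝ := Qᵀ * What * Z with hAdef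
  have hQWZ : Qᵀ * W * Z = Lam := by
    rw [hW]
    have : Qᵀ * (Q * Lam * Zᵀ) * Z = (Qᵀ * Q) * Lam * (Zᵀ * Z) := by
      simp only [Matrix.mul_assoc]
    rw [this, hQ, hZ, Matrix.one_mul, Matrix.mul_one]
  have hAeq : A = Lam + Qᵀ * F * Z := by
    rw [hAdef, hFdef, Matrix.mul_sub, Matrix.sub_mul, ← hQWZ]
    abel
  have hGnorm : ‖Qᵀ * F * Z‖ ≤ 2 * ‖E‖ := by
    calc ‖Qᵀ * F * Z‖ ≤ ‖Qᵀ * F‖ * ‖Z‖ := Matrix.l2_opNorm_mul _ _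
      _ ≤ ‖Qᵀ‖ * ‖F‖ * ‖Z‖ := by
          apply mul_le_mul_of_nonneg_right (Matrix.l2_opNorm_mul _ _) (norm_nonneg _)
      _ ≤ 1 * ‖F‖ * 1 := by
          apply mul_le_mul
          · apply mul_le_mul_of_nonneg_right _ hFnn
            rw [norm_transpose']; exact norm_orth_le Q hQ
          · exact norm_orth_le Z hZ
          · exact norm_nonneg _
          · positivity
      _ = ‖F‖ := by ring
      _ ≤ 2 * ‖E‖ := hF2
  have hccpos : 0 < (1 - 2 * cc) * γ := by nlinarith
  have hAlow : ∀ v : Fin r → ℝ, ((1 - 2 * cc) * γ) * ‖ev v‖ ≤ ‖ev (A *ᵥ v)‖ := by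
    intro v
    have h1 : A *ᵥ v = Lam *ᵥ v + (Qᵀ * F * Z) *ᵥ v := by
      rw [hAeq, Matrix.add_mulVec]
    have h2 : ‖ev (Lam *ᵥ v)‖ ≤ ‖ev (A *ᵥ v)‖ + ‖ev ((Qᵀ * F * Z) *ᵥ v)‖ := by
      have key : ev (A *ᵥ v) = ev (Lam *ᵥ v) + ev ((Qᵀ * F * Z) *ᵥ v) := by
        rw [h1, ev_add]
      calc ‖ev (Lam *ᵥ v)‖ = ‖ev (A *ᵥ v) - ev ((Qᵀ * F * Z) *ᵥ v)‖ := by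
            rw [key, add_sub_cancel_right]
        _ ≤ ‖ev (A *ᵥ v)‖ + ‖ev ((Qᵀ * F * Z) *ᵥ v)‖ := norm_sub_le _ _
    have h3 : ‖ev ((Qᵀ * F * Z) *ᵥ v)‖ ≤ (2 * ‖E‖) * ‖ev v‖ := by
      calc ‖ev ((Qᵀ * F * Z) *ᵥ v)‖ ≤ ‖Qᵀ * F * Z‖ * ‖ev v‖ := norm_mulVec_le _ _
        _ ≤ (2 * ‖E‖) * ‖ev v‖ := mul_le_mul_of_nonneg_right hGnorm (norm_nonneg _)
    have h4 := hLamLow v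
    have h5 : ‖E‖ ≤ cc * γ := hE
    nlinarith [norm_nonneg (ev v)]
  obtain ⟨hdetA, hAinv⟩ := inv_bound A hccpos hAlow
  have hfac : What = (What * Z) * A⁻¹ * (Qᵀ * What) := factor What Q Z hWhat.1 hdetA
  -- reduce N
  have hPF : (1 - Q * Qᵀ) * What = (1 - Q * Qᵀ) * F := by
    rw [hFdef, Matrix.mul_sub, hPW, sub_zero]
  have hFP : What * (1 - Z * Zᵀ) = F * (1 - Z * Zᵀ) := by
    rw [hFdef, Matrix.sub_mul, hWP, sub_zero]
  have hN : (1 - Q * Qᵀ) * (What - W) * (1 - Z * Zᵀ)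
      = (((1 - Q * Qᵀ) * F) * Z) * A⁻¹ * ((Qᵀ * F) * (1 - Z * Zᵀ)) := by
    have e1 : (1 - Q * Qᵀ) * (What - W) * (1 - Z * Zᵀ)
        = ((1 - Q * Qᵀ) * What) * (1 - Z * Zᵀ) := by rw [← hFdef, hPF]
    rw [e1]
    conv_lhs => rw [hfac]
    have e2 : (1 - Q * Qᵀ) * (What * Z * A⁻¹ * (Qᵀ * What)) * (1 - Z * Zᵀ)
        = (((1 - Q * Qᵀ) * What) * Z) * A⁻¹ * (Qᵀ * (What * (1 - Z * Zᵀ))) := by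
      simp only [Matrix.mul_assoc]
    rw [e2, hPF, hFP]
    simp only [Matrix.mul_assoc]
  -- final estimate
  rw [hN]
  have hn1 : ‖((1 - Q * Qᵀ) * F) * Z‖ ≤ 2 * ‖E‖ := by
    calc ‖((1 - Q * Qᵀ) * F) * Z‖ ≤ ‖(1 - Q * Qᵀ) * F‖ * ‖Z‖ := Matrix.l2_opNorm_mul _ _
      _ ≤ ‖(1 - Q * Qᵀ)‖ * ‖F‖ * ‖Z‖ := by
          apply mul_le_mul_of_nonneg_right (Matrix.l2_opNorm_mul _ _) (norm_nonneg _)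
      _ ≤ 1 * ‖F‖ * 1 := by
          apply mul_le_mul
          · exact mul_le_mul_of_nonneg_right (norm_proj_le Q hQ) hFnn
          · exact norm_orth_le Z hZ
          · exact norm_nonneg _
          · positivity
      _ = ‖F‖ := by ring
      _ ≤ 2 * ‖E‖ := hF2
  have hn2 : ‖(Qᵀ * F) * (1 - Z * Zᵀ)‖ ≤ 2 * ‖E‖ := by
    have hZproj : ‖(1 : Matrix (Fin c) (Fin c) ℝ) - Z * Zᵀ‖ ≤ 1 := norm_proj_le Z hZ
    calc ‖(Qᵀ * F) * (1 - Z * Zᵀ)‖ ≤ ‖Qᵀ * F‖ * ‖1 - Z * Zᵀ‖ := Matrix.l2_opNorm_mul _ _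
      _ ≤ ‖Qᵀ‖ * ‖F‖ * ‖1 - Z * Zᵀ‖ := by
          apply mul_le_mul_of_nonneg_right (Matrix.l2_opNorm_mul _ _) (norm_nonneg _)
      _ ≤ 1 * ‖F‖ * 1 := by
          apply mul_le_mul
          · apply mul_le_mul_of_nonneg_right _ hFnn
            rw [norm_transpose']; exact norm_orth_le Q hQ
          · exact hZproj
          · exact norm_nonneg _
          · positivity
      _ = ‖F‖ := by ring
      _ ≤ 2 * ‖E‖ := hF2
  have hAinvnn : (0:ℝ) ≤ ‖A⁻¹‖ := norm_nonneg _
  have hmain : ‖(((1 - Q * Qᵀ) * F) * Z) * A⁻¹ * ((Qᵀ * F) * (1 - Z * Zᵀ))‖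
      ≤ (2 * ‖E‖) * (1 / ((1 - 2 * cc) * γ)) * (2 * ‖E‖) := by
    calc ‖(((1 - Q * Qᵀ) * F) * Z) * A⁻¹ * ((Qᵀ * F) * (1 - Z * Zᵀ))‖
        ≤ ‖(((1 - Q * Qᵀ) * F) * Z) * A⁻¹‖ * ‖(Qᵀ * F) * (1 - Z * Zᵀ)‖ :=
          Matrix.l2_opNorm_mul _ _
      _ ≤ ‖((1 - Q * Qᵀ) * F) * Z‖ * ‖A⁻¹‖ * ‖(Qᵀ * F) * (1 - Z * Zᵀ)‖ := by
          apply mul_le_mul_of_nonneg_right (Matrix.l2_opNorm_mul _ _) (norm_nonneg _)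
      _ ≤ (2 * ‖E‖) * (1 / ((1 - 2 * cc) * γ)) * (2 * ‖E‖) := by
          apply mul_le_mul
          · exact mul_le_mul hn1 hAinv hAinvnn (by positivity)
          · exact hn2
          · exact norm_nonneg _
          · exact mul_nonneg (by positivity) (one_div_nonneg.mpr hccpos.le)
  have heq : (2 * ‖E‖) * (1 / ((1 - 2 * cc) * γ)) * (2 * ‖E‖)
      = (4 / (1 - 2 * cc)) * ‖E‖ ^ 2 / γ := by
    have h12 : (1 - 2 * cc) ≠ 0 := by nlinarith
    have hγne : γ ≠ 0 := hγpos.ne'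
    field_simp
    ring
  linarith [hmain, heq.le]
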